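/- Let d ≥ 2, V ⊆ {1,…,d}, θ ∈ {±1}^d with θⱼ = 1 iff j ∈ V, x ∈ ℝ^d, v = x - ((θᵀx - (|V|-1))/d)·θ, and z = Π_F(x) where F = {w ∈ [0,1]^d : θᵀw = |V|-1} is nonempty. If vᵢ < 0 and θᵢ = -1 for some index i, then zᵢ = 0. -/

import Mathlib

set_option maxHeartbeats 1000000


open Finset

/-- Squared Euclidean distance on `Fin d → ℝ`. -/
noncomputable def sqdist {d : ℕ} (x y : Fin d → ℝ) : ℝ := ∑ i, (x i - y i) ^ 2

/-- `z` is the Euclidean (nearest-point) projection of `x` onto `S`. -/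
def IsProj {d : ℕ} (S : Set (Fin d → ℝ)) (x z : Fin d → ℝ) : Prop :=
  z ∈ S ∧ ∀ y ∈ S, sqdist x z ≤ sqdist x y

/-- The even parity polytope: convex hull of 0/1 vectors with an even number of ones. -/
noncomputable def PEven (d : ℕ) : Set (Fin d → ℝ) :=
  convexHull ℝ {x | ∃ S : Finset (Fin d), Even S.card ∧ ∀ i, x i = if i ∈ S then 1 else 0}

/-- The odd parity polytope: convex hull of 0/1 vectors with an odd number of ones. -/
noncomputable def POdd (d : ℕ) : Set (Fin d → ℝ) :=
  convexHull ℝ {x | ∃ S : Finset (Fin d), Odd S.card ∧ ∀ i, x i = if i ∈ S then 1 else 0}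

private lemma clamp_sum_gt {d : ℕ} (s : Fin d → ℝ) (i : Fin d) (lam : ℝ)
    (hs : ∑ p, s p = 1) (hsi : s i < 0) (hlam : 0 < s i + lam) :
    1 < ∑ p, max 0 (min 1 (s p + lam)) := by
  have hlam0 : 0 < lam := by linarith
  by_cases hA : ∀ p, s p + lam < 1
  · have h1 : ∑ p, (s p + lam) ≤ ∑ p, max 0 (min 1 (s p + lam)) := by
      apply Finset.sum_le_sum
      intro p _
      have h := hA p
      rw [min_eq_right (le_of_lt h)]
      exact le_max_right _ _
    have h2 : ∑ p, (s p + lam) = 1 + d * lam := by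
      rw [Finset.sum_add_distrib, hs, Finset.sum_const, Finset.card_univ, Fintype.card_fin,
        nsmul_eq_mul]
    have hd1 : (1:ℝ) ≤ d := by
      have : 0 < d := i.pos
      exact_mod_cast this
    nlinarith
  · push_neg at hA
    obtain ⟨q, hq⟩ := hA
    by_cases hB : ∀ r, r ≠ q → s r + lam ≤ 0
    · exfalso
      have hiq : i = q := by
        by_contra hne
        exact absurd (hB i hne) (not_le.2 hlam)
      have hle : ∑ p, s p ≤ 0 := by
        apply Finset.sum_nonpos
        intro p _
        by_cases hp : p = q
        · subst hp; rw [← hiq]; linarith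
        · have := hB p hp; linarith
      linarith
    · push_neg at hB
      obtain ⟨r, hrq, hr⟩ := hB
      have hfq : max 0 (min 1 (s q + lam)) = 1 := by
        rw [min_eq_left hq]
        exact max_eq_right zero_le_one
      have hfr : 0 < max 0 (min 1 (s r + lam)) :=
        lt_max_iff.2 (Or.inr (lt_min one_pos hr))
      have hsum2 : ∑ p ∈ ({q, r} : Finset (Fin d)), max 0 (min 1 (s p + lam)) ≤
          ∑ p, max 0 (min 1 (s p + lam)) :=
        Finset.sum_le_sum_of_subset_of_nonneg (Finset.subset_univ _)
          (fun p _ _ => le_max_left _ _)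
      rw [Finset.sum_pair (Ne.symm hrq)] at hsum2
      linarith

theorem fix_component_to_zero (d : ℕ) (hd : 2 ≤ d) (V : Finset (Fin d))
    (θ : Fin d → ℝ) (hθ : ∀ j, θ j = if j ∈ V then 1 else -1)
    (x v : Fin d → ℝ)
    (hv : v = fun j => x j - ((∑ k, θ k * x k - ((V.card : ℝ) - 1)) / (d : ℝ)) * θ j)
    (F : Set (Fin d → ℝ))
    (hF : F = {w | (∀ j, 0 ≤ w j ∧ w j ≤ 1) ∧ ∑ k, θ k * w k = (V.card : ℝ) - 1})
    (hFne : F.Nonempty)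
    (z : Fin d → ℝ) (hz : IsProj F x z)
    (i : Fin d) (hvi : v i < 0) (hθi : θ i = -1) : z i = 0 := by
  have hd2 : (2:ℝ) ≤ d := by exact_mod_cast hd
  have hd0 : (0:ℝ) < d := by linarith
  have hθ2 : ∀ j, θ j * θ j = 1 := by
    intro j; rw [hθ j]; split <;> norm_num
  obtain ⟨hzF, hopt⟩ := hz
  rw [hF] at hzF hopt
  obtain ⟨hzbox, hzsum⟩ := hzF
  set t : ℝ := (∑ k, θ k * x k - ((V.card : ℝ) - 1)) / d with ht
  have hxv : ∀ j, x j = v j + t * θ j := by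
    intro j; rw [hv]; simp only; ring
  have hvsum : ∑ k, θ k * v k = (V.card : ℝ) - 1 := by
    have e1 : ∑ k, θ k * v k = ∑ k, (θ k * x k - t * (θ k * θ k)) := by
      apply Finset.sum_congr rfl; intro k _; rw [hv]; ring
    have e2 : ∑ k, (θ k * x k - t * (θ k * θ k)) = (∑ k, θ k * x k) - t * d := by
      rw [Finset.sum_sub_distrib]
      congr 1
      rw [← Finset.mul_sum]
      have : ∑ k, θ k * θ k = (d : ℝ) := by
        rw [Finset.sum_congr rfl (fun k _ => hθ2 k), Finset.sum_const, Finset.card_univ,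
          Fintype.card_fin, nsmul_eq_mul, mul_one]
      rw [this]
    rw [e1, e2, ht]
    field_simp
    ring
  by_contra hzi0
  have hzi : 0 < z i := lt_of_le_of_ne (hzbox i).1 (Ne.symm hzi0)
  have hiV : i ∉ V := by
    intro h
    have h1 := hθ i
    rw [if_pos h, hθi] at h1
    norm_num at h1
  set s : Fin d → ℝ := fun p => if p ∈ V then 1 - v p else v p with hsdef
  set ζ : Fin d → ℝ := fun p => if p ∈ V then 1 - z p else z p with hζdef
  have hζ01 : ∀ p, 0 ≤ ζ p ∧ ζ p ≤ 1 := by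
    intro p
    obtain ⟨h0, h1⟩ := hzbox p
    simp only [hζdef]
    split <;> constructor <;> linarith
  have hcardsum : ∑ p, (if p ∈ V then (1:ℝ) else 0) = V.card := by
    rw [Finset.sum_ite_mem, Finset.univ_inter, Finset.sum_const, nsmul_eq_mul, mul_one]
  have hssum : ∑ p, s p = 1 := by
    have e1 : ∀ p, s p = (if p ∈ V then (1:ℝ) else 0) - θ p * v p := by
      intro p
      simp only [hsdef, hθ p]
      split <;> ring
    rw [Finset.sum_congr rfl (fun p _ => e1 p), Finset.sum_sub_distrib, hcardsum, hvsum]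
    ring
  have hζsum : ∑ p, ζ p = 1 := by
    have e1 : ∀ p, ζ p = (if p ∈ V then (1:ℝ) else 0) - θ p * z p := by
      intro p
      simp only [hζdef, hθ p]
      split <;> ring
    rw [Finset.sum_congr rfl (fun p _ => e1 p), Finset.sum_sub_distrib, hcardsum, hzsum]
    ring
  have hhp : ∀ r, θ r * (v r - z r) = ζ r - s r := by
    intro r
    simp only [hsdef, hζdef, hθ r]
    split <;> ring
  -- pairwise exchange optimality
  have pair : ∀ p q, p ≠ q → 0 < ζ p → ζ q < 1 → ζ p - s p ≤ ζ q - s q := by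
    intro p q hpq hp hq
    rw [← hhp p, ← hhp q]
    by_contra hC
    push_neg at hC
    set C := θ p * (v p - z p) - θ q * (v q - z q) with hCdef
    have hC0 : 0 < C := by simp only [hCdef]; linarith
    set ε := min (min (ζ p) (1 - ζ q)) (C / 2) with hε
    have hε0 : 0 < ε := lt_min (lt_min hp (by linarith)) (by linarith)
    have hεp : ε ≤ ζ p := le_trans (min_le_left _ _) (min_le_left _ _)
    have hεq : ε ≤ 1 - ζ q := le_trans (min_le_left _ _) (min_le_right _ _)
    have hεC : ε ≤ C / 2 := min_le_right _ _
    set y : Fin d → ℝ := fun j => if j = p then z p + ε * θ p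
      else if j = q then z q - ε * θ q else z j with hy
    have hyp : y p = z p + ε * θ p := by simp [hy]
    have hyq : y q = z q - ε * θ q := by simp [hy, Ne.symm hpq]
    have hyother : ∀ j, j ≠ p → j ≠ q → y j = z j := by
      intro j h1 h2; simp [hy, h1, h2]
    have hyF : y ∈ {w : Fin d → ℝ | (∀ j, 0 ≤ w j ∧ w j ≤ 1) ∧
        ∑ k, θ k * w k = (V.card : ℝ) - 1} := by
      constructor
      · intro j
        by_cases hjp : j = p
        · subst hjp
          rw [hyp]
          obtain ⟨h0, h1⟩ := hzbox j
          by_cases hjV : j ∈ V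
          · have hθj : θ j = 1 := by rw [hθ j, if_pos hjV]
            have hζj : ζ j = 1 - z j := by simp [hζdef, hjV]
            rw [hθj, mul_one]
            rw [hζj] at hεp
            constructor <;> linarith
          · have hθj : θ j = -1 := by rw [hθ j, if_neg hjV]
            have hζj : ζ j = z j := by simp [hζdef, hjV]
            rw [hθj, mul_neg_one]
            rw [hζj] at hεp
            constructor <;> linarith
        · by_cases hjq : j = q
          · subst hjq
            rw [hyq]
            obtain ⟨h0, h1⟩ := hzbox j
            by_cases hjV : j ∈ V
            · have hθj : θ j = 1 := by rw [hθ j, if_pos hjV]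
              have hζj : ζ j = 1 - z j := by simp [hζdef, hjV]
              rw [hθj, mul_one]
              rw [hζj] at hεq
              constructor <;> linarith
            · have hθj : θ j = -1 := by rw [hθ j, if_neg hjV]
              have hζj : ζ j = z j := by simp [hζdef, hjV]
              rw [hθj, mul_neg_one]
              rw [hζj] at hεq
              constructor <;> linarith
          · rw [hyother j hjp hjq]; exact hzbox j
      · have e1 : ∀ j, θ j * y j = θ j * z j + (if j = p then ε else 0)
            - (if j = q then ε else 0) := by
          intro j
          by_cases hjp : j = p
          · subst hjp
            rw [hyp, if_pos rfl, if_neg hpq]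
            linear_combination ε * hθ2 j
          · by_cases hjq : j = q
            · subst hjq
              rw [hyq, if_neg hjp, if_pos rfl]
              linear_combination (-ε) * hθ2 j
            · rw [hyother j hjp hjq, if_neg hjp, if_neg hjq]; ring
        rw [Finset.sum_congr rfl (fun j _ => e1 j)]
        rw [Finset.sum_sub_distrib, Finset.sum_add_distrib]
        simp [hzsum]
    have hle := hopt y hyF
    have hdiff : sqdist x y - sqdist x z
        = ((x p - y p)^2 - (x p - z p)^2) + ((x q - y q)^2 - (x q - z q)^2) := by
      unfold sqdist
      rw [← Finset.sum_sub_distrib]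
      exact Finset.sum_eq_add_of_mem p q (Finset.mem_univ p) (Finset.mem_univ q) hpq
        (fun c _ hc => by rw [hyother c hc.1 hc.2]; ring)
    have hxp : θ p * (x p - z p) = θ p * (v p - z p) + t := by
      rw [hxv p]; linear_combination t * hθ2 p
    have hxq : θ q * (x q - z q) = θ q * (v q - z q) + t := by
      rw [hxv q]; linear_combination t * hθ2 q
    have hexp : sqdist x y - sqdist x z = -2 * ε * C + 2 * ε^2 := by
      rw [hdiff, hyp, hyq]
      have ep : (x p - (z p + ε * θ p))^2 - (x p - z p)^2
          = -(2*ε*(θ p * (x p - z p))) + ε^2 * (θ p * θ p) := by ring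
      have eq' : (x q - (z q - ε * θ q))^2 - (x q - z q)^2
          = 2*ε*(θ q * (x q - z q)) + ε^2 * (θ q * θ q) := by ring
      rw [ep, eq', hθ2 p, hθ2 q, hxp, hxq, hCdef]
      ring
    nlinarith [hle, hexp, hε0, hεC, hC0]

  -- construct lambda
  have hQne : (Finset.univ.filter (fun p => ζ p < 1)).Nonempty := by
    by_contra hQ
    rw [Finset.not_nonempty_iff_eq_empty, Finset.filter_eq_empty_iff] at hQ
    have : (∑ p : Fin d, (1:ℝ)) ≤ ∑ p, ζ p := by
      apply Finset.sum_le_sum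
      intro p hp
      exact not_lt.1 (hQ hp)
    rw [Finset.sum_const, Finset.card_univ, Fintype.card_fin, nsmul_eq_mul, mul_one] at this
    linarith [hζsum, hd2, this]
  set lam : ℝ := (Finset.univ.filter (fun p => ζ p < 1)).inf' hQne (fun p => ζ p - s p)
    with hlamdef
  obtain ⟨q₀, hq₀mem, hq₀⟩ := Finset.exists_mem_eq_inf' hQne (fun p => ζ p - s p)
  have hq₀lt : ζ q₀ < 1 := (Finset.mem_filter.1 hq₀mem).2
  have hq₀' : lam = ζ q₀ - s q₀ := hq₀
  have up_le : ∀ p, 0 < ζ p → ζ p - s p ≤ lam := by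
    intro p hp
    by_cases hpq : p = q₀
    · subst hpq; rw [hq₀']
    · rw [hq₀']
      exact pair p q₀ hpq hp hq₀lt
  have down_ge : ∀ p, ζ p < 1 → lam ≤ ζ p - s p := by
    intro p hp
    exact Finset.inf'_le _ (Finset.mem_filter.2 ⟨Finset.mem_univ p, hp⟩)
  have hζi : ζ i = z i := by simp [hζdef, hiV]
  have hsi : s i = v i := by simp [hsdef, hiV]
  have hsi0 : s i < 0 := by rw [hsi]; exact hvi
  have hlami : 0 < s i + lam := by
    have := up_le i (by rw [hζi]; exact hzi)
    rw [hζi] at this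
    linarith
  have hclamp : ∀ p, ζ p = max 0 (min 1 (s p + lam)) := by
    intro p
    obtain ⟨h0, h1⟩ := hζ01 p
    rcases eq_or_lt_of_le h0 with h0' | h0'
    · -- ζ p = 0
      have hlt : ζ p < 1 := by linarith
      have := down_ge p hlt
      rw [← h0'] at this ⊢
      have hsp : s p + lam ≤ 0 := by linarith
      rw [min_eq_right (by linarith : s p + lam ≤ 1), max_eq_left hsp]
    · rcases eq_or_lt_of_le h1 with h1' | h1'
      · -- ζ p = 1
        have := up_le p h0'
        rw [h1'] at this ⊢
        have hsp : 1 ≤ s p + lam := by linarith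
        rw [min_eq_left hsp, max_eq_right zero_le_one]
      · -- interior
        have ha := up_le p h0'
        have hb := down_ge p h1'
        have : ζ p = s p + lam := by linarith
        rw [← this, min_eq_right (le_of_lt h1'), max_eq_right h0]
  have hcontra := clamp_sum_gt s i lam hssum hsi0 hlami
  have hfin : (1:ℝ) < 1 := by
    calc (1:ℝ) < ∑ p, max 0 (min 1 (s p + lam)) := hcontra
      _ = ∑ p, ζ p := Finset.sum_congr rfl (fun p _ => (hclamp p).symm)
      _ = 1 := hζsum
  exact lt_irrefl 1 hfin
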